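/- Let X → Y → X̃ be a Markov chain of discrete random variables with X, X̃ taking values in a finite set 𝒳. For each x ∈ 𝒳 let 𝒜ₓ ⊆ 𝒳 be a set of 'approximations' satisfying: (i) x ∈ 𝒜ₓ for each x, and (ii) x' ∈ 𝒜ₓ iff x ∈ 𝒜ₓ' for all x, x'. Let p_e = Pr[X̃ ∉ 𝒜_X] and let H(p_e) denote the binary entropy of p_e. Then p_e·log|𝒳| + (1−p_e)·sup_x log|𝒜ₓ| + H(p_e) ≥ H(X | Y). -/

import Mathlib

open Finset

-- Probability of an event under a finite probability mass function.
open Classical in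
noncomputable def prob {Ω : Type*} [Fintype Ω] (μ : Ω → ℝ) (E : Set Ω) : ℝ :=
  ∑ ω, if ω ∈ E then μ ω else 0

-- Shannon entropy (base 2) of a random variable `X` on a finite probability space.
noncomputable def entropy {Ω α : Type*} [Fintype Ω] (μ : Ω → ℝ) (X : Ω → α) : ℝ :=
  -∑ ω, μ ω * Real.logb 2 (prob μ {ω' | X ω' = X ω})

-- Conditional entropy `H(X | Y) = H(X,Y) − H(Y)`.
noncomputable def condEntropy {Ω α β : Type*} [Fintype Ω] (μ : Ω → ℝ)
    (X : Ω → α) (Y : Ω → β) : ℝ :=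
  entropy μ (fun ω => (X ω, Y ω)) - entropy μ Y

-- Binary entropy function (base 2).
noncomputable def binEnt (x : ℝ) : ℝ :=
  -(x * Real.logb 2 x) - (1 - x) * Real.logb 2 (1 - x)

lemma prob_eq_sum_filter {Ω : Type*} [Fintype Ω] (μ : Ω → ℝ) (p : Ω → Prop) [DecidablePred p] :
    prob μ {ω | p ω} = ∑ ω ∈ Finset.univ.filter p, μ ω := by
  rw [Finset.sum_filter, prob]
  refine Finset.sum_congr rfl fun ω _ => ?_
  split_ifs with h h' <;> first | rfl | simp_all [Set.mem_setOf_eq]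

lemma fiber_sum {Ω γ : Type*} [Fintype Ω] [DecidableEq γ] (μ : Ω → ℝ) (c : Ω → γ)
    (t : Finset γ) (ht : ∀ ω, c ω ∈ t) (F : γ → ℝ) :
    ∑ ω, μ ω * F (c ω) = ∑ g ∈ t, (∑ ω ∈ Finset.univ.filter (fun ω => c ω = g), μ ω) * F g := by
  rw [← Finset.sum_fiberwise_of_maps_to (fun ω _ => ht ω) (fun ω => μ ω * F (c ω))]
  refine Finset.sum_congr rfl fun g _ => ?_
  rw [Finset.sum_mul]
  refine Finset.sum_congr rfl fun ω hω => ?_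
  rw [(Finset.mem_filter.mp hω).2]

lemma fiber_split {Ω γ : Type*} [Fintype Ω] [DecidableEq γ] (μ : Ω → ℝ) (p : Ω → Prop)
    [DecidablePred p] (c : Ω → γ) (t : Finset γ) (ht : ∀ ω, c ω ∈ t) :
    ∑ ω ∈ Finset.univ.filter p, μ ω
      = ∑ g ∈ t, ∑ ω ∈ Finset.univ.filter (fun ω => p ω ∧ c ω = g), μ ω := by
  rw [← Finset.sum_fiberwise_of_maps_to (fun (ω : Ω) _ => ht ω) μ]
  refine Finset.sum_congr rfl fun g _ => ?_
  rw [Finset.filter_filter]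

lemma filter_sum_ext {Ω : Type*} [Fintype Ω] (μ : Ω → ℝ) (p q : Ω → Prop)
    [DecidablePred p] [DecidablePred q] (h : ∀ ω, p ω ↔ q ω) :
    ∑ ω ∈ Finset.univ.filter p, μ ω = ∑ ω ∈ Finset.univ.filter q, μ ω := by
  rw [Finset.filter_congr (fun ω _ => h ω)]

lemma entropy_eq {Ω γ : Type*} [Fintype Ω] [DecidableEq γ] (μ : Ω → ℝ) (c : Ω → γ)
    (t : Finset γ) (ht : ∀ ω, c ω ∈ t) :
    entropy μ c
      = -∑ g ∈ t, (∑ ω ∈ Finset.univ.filter (fun ω => c ω = g), μ ω)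
          * Real.logb 2 (∑ ω ∈ Finset.univ.filter (fun ω => c ω = g), μ ω) := by
  unfold entropy
  congr 1
  rw [fiber_sum μ c t ht (fun g => Real.logb 2 (prob μ {ω' | c ω' = g}))]
  refine Finset.sum_congr rfl fun g _ => ?_
  rw [prob_eq_sum_filter μ (fun ω => c ω = g)]

lemma jensen_logb {ι : Type*} (s : Finset ι) (w a : ι → ℝ) (hw : ∀ i ∈ s, 0 ≤ w i)
    (hw1 : ∑ i ∈ s, w i = 1) (ha : ∀ i ∈ s, w i ≠ 0 → 0 < a i)
    (hS : ∑ i ∈ s, w i * a i ≤ 1) :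
    ∑ i ∈ s, w i * Real.logb 2 (a i) ≤ 0 := by
  have h2 : (0:ℝ) < Real.log 2 := Real.log_pos one_lt_two
  have step : ∀ i ∈ s, w i * Real.logb 2 (a i) ≤ (w i * a i - w i) * (Real.log 2)⁻¹ := by
    intro i hi
    by_cases hwi : w i = 0
    · simp [hwi]
    · have hw' : 0 < w i := (hw i hi).lt_of_ne (Ne.symm hwi)
      have hai := ha i hi hwi
      have hlog : Real.log (a i) ≤ a i - 1 := Real.log_le_sub_one_of_pos hai
      have : w i * Real.logb 2 (a i) ≤ w i * ((a i - 1) * (Real.log 2)⁻¹) := by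
        apply mul_le_mul_of_nonneg_left _ hw'.le
        rw [Real.logb, div_eq_mul_inv]
        exact mul_le_mul_of_nonneg_right hlog (inv_nonneg.mpr h2.le)
      calc w i * Real.logb 2 (a i) ≤ w i * ((a i - 1) * (Real.log 2)⁻¹) := this
        _ = (w i * a i - w i) * (Real.log 2)⁻¹ := by ring
  calc ∑ i ∈ s, w i * Real.logb 2 (a i)
      ≤ ∑ i ∈ s, (w i * a i - w i) * (Real.log 2)⁻¹ := Finset.sum_le_sum step
    _ = ((∑ i ∈ s, w i * a i) - 1) * (Real.log 2)⁻¹ := by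
        rw [← Finset.sum_mul, Finset.sum_sub_distrib, hw1]
    _ ≤ 0 := mul_nonpos_of_nonpos_of_nonneg (by linarith) (inv_nonneg.mpr h2.le)

lemma fano_core {𝒳 β' : Type*} [Fintype 𝒳] [Nonempty 𝒳] [DecidableEq 𝒳] (Yim : Finset β')
    (P : 𝒳 → β' → 𝒳 → ℝ) (Pxy : 𝒳 → β' → ℝ) (Py : β' → ℝ) (Pyz : β' → 𝒳 → ℝ)
    (hP0 : ∀ x y z, 0 ≤ P x y z)
    (hPxyP : ∀ x y, Pxy x y = ∑ z, P x y z)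
    (hPyP : ∀ y, Py y = ∑ x, Pxy x y)
    (hPyzP : ∀ y z, Pyz y z = ∑ x, P x y z)
    (htot : ∑ x, ∑ y ∈ Yim, ∑ z, P x y z = 1)
    (hM : ∀ x y z, P x y z * Py y = Pxy x y * Pyz y z)
    (𝒜 : 𝒳 → Finset 𝒳) (hmem : ∀ x, x ∈ 𝒜 x)
    (pe : ℝ)
    (hpe' : pe = ∑ x, ∑ y ∈ Yim, ∑ z, (if x ∈ 𝒜 z then 0 else P x y z)) :
    ∑ x, ∑ y ∈ Yim, Pxy x y * (Real.logb 2 (Py y) - Real.logb 2 (Pxy x y)) ≤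
      pe * Real.logb 2 (Fintype.card 𝒳)
        + (1 - pe) * (⨆ x : 𝒳, Real.logb 2 ((𝒜 x).card)) + binEnt pe := by
  classical
  have hPxy0 : ∀ x y, 0 ≤ Pxy x y := fun x y => (hPxyP x y) ▸ Finset.sum_nonneg fun z _ => hP0 x y z
  have hPy0 : ∀ y, 0 ≤ Py y := fun y => (hPyP y) ▸ Finset.sum_nonneg fun x _ => hPxy0 x y
  have hPyz0 : ∀ y z, 0 ≤ Pyz y z := fun y z => (hPyzP y z) ▸ Finset.sum_nonneg fun x _ => hP0 x y z
  have hP_le_Pxy : ∀ x y z, P x y z ≤ Pxy x y := fun x y z => by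
    rw [hPxyP]; exact Finset.single_le_sum (fun c _ => hP0 x y c) (Finset.mem_univ z)
  have hPxy_le_Py : ∀ x y, Pxy x y ≤ Py y := fun x y => by
    rw [hPyP]; exact Finset.single_le_sum (fun c _ => hPxy0 c y) (Finset.mem_univ x)
  have tri_le : ∀ (f : 𝒳 → β' → 𝒳 → ℝ), (∀ a b c, 0 ≤ f a b c) → ∀ x y, y ∈ Yim → ∀ z,
      f x y z ≤ ∑ a, ∑ b ∈ Yim, ∑ c, f a b c := by
    intro f hf x y hy z
    calc f x y z ≤ ∑ c, f x y c := Finset.single_le_sum (fun c _ => hf x y c) (Finset.mem_univ z)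
      _ ≤ ∑ b ∈ Yim, ∑ c, f x b c :=
          Finset.single_le_sum (fun b _ => Finset.sum_nonneg fun c _ => hf x b c) hy
      _ ≤ ∑ a, ∑ b ∈ Yim, ∑ c, f a b c :=
          Finset.single_le_sum
            (fun a _ => Finset.sum_nonneg fun b _ => Finset.sum_nonneg fun c _ => hf a b c)
            (Finset.mem_univ x)
  have hgood_bad : (∑ x, ∑ y ∈ Yim, ∑ z, (if x ∈ 𝒜 z then P x y z else 0)) = 1 - pe := by
    rw [hpe', eq_sub_iff_add_eq, ← htot, ← Finset.sum_add_distrib]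
    refine Finset.sum_congr rfl fun x _ => ?_
    rw [← Finset.sum_add_distrib]
    refine Finset.sum_congr rfl fun y _ => ?_
    rw [← Finset.sum_add_distrib]
    refine Finset.sum_congr rfl fun z _ => ?_
    split <;> simp
  have hpe0 : 0 ≤ pe := by
    rw [hpe']
    refine Finset.sum_nonneg fun x _ => Finset.sum_nonneg fun y _ => Finset.sum_nonneg fun z _ => ?_
    split
    · exact le_refl 0
    · exact hP0 x y z
  have hgood0 : 0 ≤ 1 - pe := by
    rw [← hgood_bad]
    refine Finset.sum_nonneg fun x _ => Finset.sum_nonneg fun y _ => Finset.sum_nonneg fun z _ => ?_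
    split
    · exact hP0 x y z
    · exact le_refl 0
  have hAcard : ∀ z : 𝒳, 0 < ((𝒜 z).card : ℝ) := fun z => by
    exact_mod_cast Finset.card_pos.mpr ⟨z, hmem z⟩
  have hN : (0:ℝ) < (Fintype.card 𝒳 : ℝ) := by exact_mod_cast Fintype.card_pos
  set S := ⨆ x : 𝒳, Real.logb 2 ((𝒜 x).card) with hSdef
  have hS_ge : ∀ z, Real.logb 2 ((𝒜 z).card) ≤ S := fun z => by
    rw [hSdef]
    exact le_ciSup (Set.Finite.bddAbove (Set.finite_range (fun x : 𝒳 => Real.logb 2 ((𝒜 x).card : ℝ)))) z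
  have hS0 : 0 ≤ S := by
    refine le_trans ?_ (hS_ge (Classical.arbitrary 𝒳))
    apply Real.logb_nonneg one_lt_two
    exact_mod_cast Finset.card_pos.mpr ⟨_, hmem (Classical.arbitrary 𝒳)⟩
  set r : 𝒳 → 𝒳 → ℝ :=
    fun x z => if x ∈ 𝒜 z then (1 - pe) / ((𝒜 z).card) else pe / (Fintype.card 𝒳) with hrdef
  have hr0 : ∀ x z, 0 ≤ r x z := by
    intro x z; rw [hrdef]; dsimp only; split
    · exact div_nonneg hgood0 (hAcard z).le
    · exact div_nonneg hpe0 hN.le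
  have hr_sum : ∀ z, ∑ x, r x z ≤ 1 := by
    intro z
    have h1 : Finset.univ.filter (fun x : 𝒳 => x ∈ 𝒜 z) = 𝒜 z := by ext u; simp
    rw [hrdef]
    dsimp only
    rw [Finset.sum_ite, Finset.sum_const, Finset.sum_const, h1, nsmul_eq_mul, nsmul_eq_mul]
    have e1 : ((𝒜 z).card : ℝ) * ((1 - pe) / ((𝒜 z).card : ℝ)) = 1 - pe := by
      rw [← mul_div_assoc]
      exact mul_div_cancel_left₀ _ (hAcard z).ne'
    have e2 : ((Finset.univ.filter (fun x : 𝒳 => ¬ x ∈ 𝒜 z)).card : ℝ)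
        * (pe / (Fintype.card 𝒳 : ℝ)) ≤ pe := by
      have h2 : ((Finset.univ.filter (fun x : 𝒳 => ¬ x ∈ 𝒜 z)).card : ℝ)
          ≤ (Fintype.card 𝒳 : ℝ) := by exact_mod_cast Finset.card_filter_le _ _
      calc ((Finset.univ.filter (fun x : 𝒳 => ¬ x ∈ 𝒜 z)).card : ℝ) * (pe / (Fintype.card 𝒳 : ℝ))
          ≤ (Fintype.card 𝒳 : ℝ) * (pe / (Fintype.card 𝒳 : ℝ)) :=
            mul_le_mul_of_nonneg_right h2 (div_nonneg hpe0 hN.le)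
        _ = pe := by rw [← mul_div_assoc]; exact mul_div_cancel_left₀ _ hN.ne'
    linarith
  have hgood_le : ∀ x y, y ∈ Yim → ∀ z, x ∈ 𝒜 z → P x y z ≤ 1 - pe := by
    intro x y hy z hxz
    have := tri_le (fun a b c => if a ∈ 𝒜 c then P a b c else 0)
      (fun a b c => by split; exacts [hP0 a b c, le_refl 0]) x y hy z
    rw [hgood_bad] at this
    simpa [hxz] using this
  have hbad_le : ∀ x y, y ∈ Yim → ∀ z, x ∉ 𝒜 z → P x y z ≤ pe := by
    intro x y hy z hxz
    have := tri_le (fun a b c => if a ∈ 𝒜 c then 0 else P a b c)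
      (fun a b c => by split; exacts [le_refl 0, hP0 a b c]) x y hy z
    rw [← hpe'] at this
    simpa [hxz] using this
  -- product index set
  set T : Finset (𝒳 × β' × 𝒳) := Finset.univ ×ˢ Yim ×ˢ Finset.univ with hTdef
  have hTsum : ∀ f : 𝒳 → β' → 𝒳 → ℝ,
      ∑ p ∈ T, f p.1 p.2.1 p.2.2 = ∑ x, ∑ y ∈ Yim, ∑ z, f x y z := by
    intro f
    rw [hTdef, Finset.sum_product]
    exact Finset.sum_congr rfl fun x _ => Finset.sum_product _ _ _
  have hTmem : ∀ p : 𝒳 × β' × 𝒳, p ∈ T → p.2.1 ∈ Yim := by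
    intro p hp
    rw [hTdef, Finset.mem_product] at hp
    exact (Finset.mem_product.mp hp.2).1
  set w : 𝒳 × β' × 𝒳 → ℝ := fun p => P p.1 p.2.1 p.2.2 with hwdef
  set a : 𝒳 × β' × 𝒳 → ℝ :=
    fun p => if w p = 0 then 1 else Py p.2.1 * r p.1 p.2.2 / Pxy p.1 p.2.1 with hadef
  have hapos : ∀ p ∈ T, w p ≠ 0 → 0 < a p := by
    intro p hp hwp
    have hy := hTmem p hp
    rcases p with ⟨x, q⟩; rcases q with ⟨y, z⟩
    have hPpos : 0 < P x y z := (hP0 x y z).lt_of_ne (Ne.symm hwp)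
    have h1 : 0 < Pxy x y := lt_of_lt_of_le hPpos (hP_le_Pxy x y z)
    have h2 : 0 < Py y := lt_of_lt_of_le h1 (hPxy_le_Py x y)
    have h3 : 0 < r x z := by
      rw [hrdef]; dsimp only; split
      · rename_i hxz
        exact div_pos (lt_of_lt_of_le hPpos (hgood_le x y hy z hxz)) (hAcard z)
      · rename_i hxz
        exact div_pos (lt_of_lt_of_le hPpos (hbad_le x y hy z hxz)) hN
    rw [hadef]; dsimp only; rw [if_neg hwp]
    exact div_pos (mul_pos h2 h3) h1
  have hJ : ∑ p ∈ T, w p * Real.logb 2 (a p) ≤ 0 := by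
    apply jensen_logb T w a (fun p _ => hP0 _ _ _) _ hapos
    · -- sum w * a ≤ 1
      have hterm : ∀ p ∈ T, w p * a p ≤ Pyz p.2.1 p.2.2 * r p.1 p.2.2 := by
        intro p hp
        rcases p with ⟨x, q⟩; rcases q with ⟨y, z⟩
        by_cases hwp : w (x, y, z) = 0
        · rw [hwp, zero_mul]
          exact mul_nonneg (hPyz0 y z) (hr0 x z)
        · have hPpos : 0 < P x y z := (hP0 x y z).lt_of_ne (Ne.symm hwp)
          have h1 : 0 < Pxy x y := lt_of_lt_of_le hPpos (hP_le_Pxy x y z)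
          rw [hadef]; dsimp only; rw [if_neg hwp]
          rw [hwdef]; dsimp only
          have : P x y z * (Py y * r x z / Pxy x y) = P x y z * Py y * r x z / Pxy x y := by
            ring
          rw [this, hM x y z]
          rw [show Pxy x y * Pyz y z * r x z / Pxy x y
              = Pyz y z * r x z * (Pxy x y / Pxy x y) by ring, div_self h1.ne', mul_one]
      calc ∑ p ∈ T, w p * a p
          ≤ ∑ p ∈ T, Pyz p.2.1 p.2.2 * r p.1 p.2.2 := Finset.sum_le_sum hterm
        _ = ∑ x, ∑ y ∈ Yim, ∑ z, Pyz y z * r x z := hTsum (fun x y z => Pyz y z * r x z)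
        _ = ∑ y ∈ Yim, ∑ z, Pyz y z * (∑ x, r x z) := by
            rw [Finset.sum_comm]
            refine Finset.sum_congr rfl fun y _ => ?_
            rw [Finset.sum_comm]
            refine Finset.sum_congr rfl fun z _ => ?_
            rw [Finset.mul_sum]
        _ ≤ ∑ y ∈ Yim, ∑ z, Pyz y z * 1 := by
            refine Finset.sum_le_sum fun y _ => Finset.sum_le_sum fun z _ => ?_
            exact mul_le_mul_of_nonneg_left (hr_sum z) (hPyz0 y z)
        _ = 1 := by
            simp only [mul_one]
            have hswap : ∑ x, ∑ y ∈ Yim, ∑ z, P x y z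
                = ∑ y ∈ Yim, ∑ z : 𝒳, ∑ x, P x y z := by
              rw [Finset.sum_comm]
              exact Finset.sum_congr rfl fun y _ => Finset.sum_comm
            have h3 : ∑ y ∈ Yim, ∑ z, Pyz y z = ∑ y ∈ Yim, ∑ z : 𝒳, ∑ x, P x y z :=
              Finset.sum_congr rfl fun y _ => Finset.sum_congr rfl fun z _ => hPyzP y z
            rw [h3, ← hswap, htot]
    · exact (hTsum (fun x y z => P x y z)).trans htot
  -- rewrite LHS as triple sum
  have hLHS : ∑ x, ∑ y ∈ Yim, Pxy x y * (Real.logb 2 (Py y) - Real.logb 2 (Pxy x y))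
      = ∑ p ∈ T, w p * (Real.logb 2 (Py p.2.1) - Real.logb 2 (Pxy p.1 p.2.1)) := by
    rw [hTsum (fun x y z => P x y z * (Real.logb 2 (Py y) - Real.logb 2 (Pxy x y)))]
    refine Finset.sum_congr rfl fun x _ => Finset.sum_congr rfl fun y _ => ?_
    rw [hPxyP x y, Finset.sum_mul]
  have hsplit : ∀ p ∈ T, w p * (Real.logb 2 (Py p.2.1) - Real.logb 2 (Pxy p.1 p.2.1))
      = w p * Real.logb 2 (a p) + w p * (- Real.logb 2 (r p.1 p.2.2)) := by
    intro p hp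
    have hy := hTmem p hp
    rcases p with ⟨x, q⟩; rcases q with ⟨y, z⟩
    by_cases hwp : w (x, y, z) = 0
    · rw [hwp]; ring
    · have hPpos : 0 < P x y z := (hP0 x y z).lt_of_ne (Ne.symm hwp)
      have h1 : 0 < Pxy x y := lt_of_lt_of_le hPpos (hP_le_Pxy x y z)
      have h2 : 0 < Py y := lt_of_lt_of_le h1 (hPxy_le_Py x y)
      have h3 : 0 < r x z := by
        rw [hrdef]; dsimp only; split
        · rename_i hxz
          exact div_pos (lt_of_lt_of_le hPpos (hgood_le x y hy z hxz)) (hAcard z)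
        · rename_i hxz
          exact div_pos (lt_of_lt_of_le hPpos (hbad_le x y hy z hxz)) hN
      rw [hadef]; dsimp only; rw [if_neg hwp]
      rw [Real.logb_div (mul_pos h2 h3).ne' h1.ne', Real.logb_mul h2.ne' h3.ne']
      ring
  -- final bound on the r-term
  have hfinal : ∑ x, ∑ y ∈ Yim, ∑ z, P x y z * (- Real.logb 2 (r x z))
      ≤ pe * Real.logb 2 (Fintype.card 𝒳) + (1 - pe) * S + binEnt pe := by
    have hterm : ∀ x, ∀ y ∈ Yim, ∀ z : 𝒳, P x y z * (- Real.logb 2 (r x z))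
        ≤ (if x ∈ 𝒜 z then P x y z else 0) * (S - Real.logb 2 (1 - pe))
          + (if x ∈ 𝒜 z then 0 else P x y z)
            * (Real.logb 2 (Fintype.card 𝒳) - Real.logb 2 pe) := by
      intro x y hy z
      rw [hrdef]; dsimp only
      by_cases hxz : x ∈ 𝒜 z
      · rw [if_pos hxz, if_pos hxz, if_pos hxz, zero_mul, add_zero]
        refine mul_le_mul_of_nonneg_left ?_ (hP0 x y z)
        by_cases h1pe : 1 - pe = 0
        · rw [h1pe, zero_div, Real.logb_zero, neg_zero, sub_zero]
          exact hS0
        · have h1pe' : 0 < 1 - pe := hgood0.lt_of_ne (Ne.symm h1pe)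
          rw [Real.logb_div h1pe (hAcard z).ne']
          have := hS_ge z
          linarith
      · rw [if_neg hxz, if_neg hxz, if_neg hxz, zero_mul, zero_add]
        by_cases hpe0' : pe = 0
        · have hP0' : P x y z = 0 :=
            le_antisymm (hpe0' ▸ hbad_le x y hy z hxz) (hP0 x y z)
          simp [hP0']
        · rw [Real.logb_div hpe0' hN.ne']
          apply le_of_eq
          ring
    calc ∑ x, ∑ y ∈ Yim, ∑ z, P x y z * (- Real.logb 2 (r x z))
        ≤ ∑ x, ∑ y ∈ Yim, ∑ z : 𝒳,
            ((if x ∈ 𝒜 z then P x y z else 0) * (S - Real.logb 2 (1 - pe))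
              + (if x ∈ 𝒜 z then 0 else P x y z)
                * (Real.logb 2 (Fintype.card 𝒳) - Real.logb 2 pe)) := by
          refine Finset.sum_le_sum fun x _ => Finset.sum_le_sum fun y hy =>
            Finset.sum_le_sum fun z _ => hterm x y hy z
      _ = (∑ x, ∑ y ∈ Yim, ∑ z, (if x ∈ 𝒜 z then P x y z else 0))
            * (S - Real.logb 2 (1 - pe))
          + (∑ x, ∑ y ∈ Yim, ∑ z, (if x ∈ 𝒜 z then 0 else P x y z))
            * (Real.logb 2 (Fintype.card 𝒳) - Real.logb 2 pe) := by
          simp only [Finset.sum_add_distrib, ← Finset.sum_mul]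
      _ = (1 - pe) * (S - Real.logb 2 (1 - pe))
          + pe * (Real.logb 2 (Fintype.card 𝒳) - Real.logb 2 pe) := by
          rw [hgood_bad, ← hpe']
      _ = pe * Real.logb 2 (Fintype.card 𝒳) + (1 - pe) * S + binEnt pe := by
          rw [binEnt]; ring
  -- assemble
  calc ∑ x, ∑ y ∈ Yim, Pxy x y * (Real.logb 2 (Py y) - Real.logb 2 (Pxy x y))
      = ∑ p ∈ T, (w p * Real.logb 2 (a p) + w p * (- Real.logb 2 (r p.1 p.2.2))) :=
        hLHS.trans (Finset.sum_congr rfl hsplit)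
    _ = (∑ p ∈ T, w p * Real.logb 2 (a p))
        + ∑ p ∈ T, w p * (- Real.logb 2 (r p.1 p.2.2)) := Finset.sum_add_distrib
    _ ≤ 0 + ∑ p ∈ T, w p * (- Real.logb 2 (r p.1 p.2.2)) := by
        exact add_le_add_left hJ _
    _ = ∑ x, ∑ y ∈ Yim, ∑ z, P x y z * (- Real.logb 2 (r x z)) := by
        rw [zero_add]
        exact hTsum (fun x y z => P x y z * (- Real.logb 2 (r x z)))
    _ ≤ pe * Real.logb 2 (Fintype.card 𝒳) + (1 - pe) * S + binEnt pe := hfinal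

/-- **Generalized Fano inequality.**  Let `X → Y → X̃` be a Markov chain with `X, X̃`
taking values in a finite set `𝒳`, and let `𝒜 x ⊆ 𝒳` be symmetric approximation
sets with `x ∈ 𝒜 x`.  With `p_e = Pr[X̃ ∉ 𝒜 X]`,
`p_e·log|𝒳| + (1−p_e)·sup_x log|𝒜 x| + H(p_e) ≥ H(X|Y)`. -/
theorem generalized_fano
    {Ω 𝒳 β : Type*} [Fintype Ω] [Fintype 𝒳] [Nonempty 𝒳]
    (μ : Ω → ℝ) (hμ0 : ∀ ω, 0 ≤ μ ω) (hμ1 : ∑ ω, μ ω = 1)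
    (X : Ω → 𝒳) (Y : Ω → β) (Xt : Ω → 𝒳)
    (hMarkov : ∀ (x : 𝒳) (y : β) (z : 𝒳),
      prob μ {ω | X ω = x ∧ Y ω = y ∧ Xt ω = z} * prob μ {ω | Y ω = y}
        = prob μ {ω | X ω = x ∧ Y ω = y} * prob μ {ω | Y ω = y ∧ Xt ω = z})
    (𝒜 : 𝒳 → Finset 𝒳) (hmem : ∀ x, x ∈ 𝒜 x)
    (hsym : ∀ x x', x' ∈ 𝒜 x ↔ x ∈ 𝒜 x')
    (pe : ℝ) (hpe : pe = prob μ {ω | Xt ω ∉ 𝒜 (X ω)}) :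
    condEntropy μ X Y ≤
      pe * Real.logb 2 (Fintype.card 𝒳)
        + (1 - pe) * (⨆ x : 𝒳, Real.logb 2 ((𝒜 x).card)) + binEnt pe := by

  classical
  set Yim : Finset β := Finset.univ.image Y with hYimdef
  have hYmem : ∀ ω, Y ω ∈ Yim := fun ω => by
    rw [hYimdef]; exact Finset.mem_image_of_mem Y (Finset.mem_univ ω)
  set P : 𝒳 → β → 𝒳 → ℝ := fun x y z =>
    ∑ ω ∈ Finset.univ.filter (fun ω => X ω = x ∧ Y ω = y ∧ Xt ω = z), μ ω with hPdef
  set Pxy : 𝒳 → β → ℝ := fun x y =>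
    ∑ ω ∈ Finset.univ.filter (fun ω => X ω = x ∧ Y ω = y), μ ω with hPxydef
  set Py : β → ℝ := fun y =>
    ∑ ω ∈ Finset.univ.filter (fun ω => Y ω = y), μ ω with hPydef
  set Pyz : β → 𝒳 → ℝ := fun y z =>
    ∑ ω ∈ Finset.univ.filter (fun ω => Y ω = y ∧ Xt ω = z), μ ω with hPyzdef
  have hP0 : ∀ x y z, 0 ≤ P x y z := by
    intro x y z; simp only [hPdef]
    exact Finset.sum_nonneg fun ω _ => hμ0 ω
  have hPxyP : ∀ x y, Pxy x y = ∑ z, P x y z := by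
    intro x y; simp only [hPxydef, hPdef]
    rw [fiber_split μ (fun ω => X ω = x ∧ Y ω = y) Xt Finset.univ (fun ω => Finset.mem_univ _)]
    exact Finset.sum_congr rfl fun z _ => filter_sum_ext μ _ _ (fun ω => by tauto)
  have hPyP : ∀ y, Py y = ∑ x, Pxy x y := by
    intro y; simp only [hPydef, hPxydef]
    rw [fiber_split μ (fun ω => Y ω = y) X Finset.univ (fun ω => Finset.mem_univ _)]
    exact Finset.sum_congr rfl fun x _ => filter_sum_ext μ _ _ (fun ω => by tauto)
  have hPyzP : ∀ y z, Pyz y z = ∑ x, P x y z := by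
    intro y z; simp only [hPyzdef, hPdef]
    rw [fiber_split μ (fun ω => Y ω = y ∧ Xt ω = z) X Finset.univ (fun ω => Finset.mem_univ _)]
    exact Finset.sum_congr rfl fun x _ => filter_sum_ext μ _ _ (fun ω => by tauto)
  have htot : ∑ x, ∑ y ∈ Yim, ∑ z, P x y z = 1 := by
    calc ∑ x, ∑ y ∈ Yim, ∑ z, P x y z
        = ∑ x, ∑ y ∈ Yim, Pxy x y :=
          Finset.sum_congr rfl fun x _ => Finset.sum_congr rfl fun y _ => (hPxyP x y).symm
      _ = ∑ x, ∑ ω ∈ Finset.univ.filter (fun ω => X ω = x), μ ω := by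
          refine Finset.sum_congr rfl fun x _ => ?_
          simp only [hPxydef]
          exact (fiber_split μ (fun ω => X ω = x) Y Yim hYmem).symm
      _ = ∑ ω, μ ω := Finset.sum_fiberwise_of_maps_to (fun ω _ => Finset.mem_univ (X ω)) μ
      _ = 1 := hμ1
  have hM : ∀ x y z, P x y z * Py y = Pxy x y * Pyz y z := by
    intro x y z
    have h := hMarkov x y z
    rw [prob_eq_sum_filter μ (fun ω => X ω = x ∧ Y ω = y ∧ Xt ω = z),
        prob_eq_sum_filter μ (fun ω => Y ω = y),
        prob_eq_sum_filter μ (fun ω => X ω = x ∧ Y ω = y),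
        prob_eq_sum_filter μ (fun ω => Y ω = y ∧ Xt ω = z)] at h
    simp only [hPdef, hPydef, hPxydef, hPyzdef]
    exact h
  have hpe' : pe = ∑ x, ∑ y ∈ Yim, ∑ z, (if x ∈ 𝒜 z then 0 else P x y z) := by
    rw [hpe, prob_eq_sum_filter μ (fun ω => Xt ω ∉ 𝒜 (X ω)),
        fiber_split μ (fun ω => Xt ω ∉ 𝒜 (X ω)) X Finset.univ (fun ω => Finset.mem_univ _)]
    refine Finset.sum_congr rfl fun x _ => ?_
    rw [fiber_split μ _ Y Yim hYmem]
    refine Finset.sum_congr rfl fun y _ => ?_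
    rw [fiber_split μ _ Xt Finset.univ (fun ω => Finset.mem_univ _)]
    refine Finset.sum_congr rfl fun z _ => ?_
    by_cases hxz : x ∈ 𝒜 z
    · rw [if_pos hxz, Finset.filter_false_of_mem, Finset.sum_empty]
      rintro ω - ⟨⟨⟨hnot, hX⟩, hY⟩, hXt⟩
      apply hnot
      rw [hX, hXt]
      exact (hsym z x).mp hxz
    · rw [if_neg hxz]
      simp only [hPdef]
      refine filter_sum_ext μ _ _ fun ω => ?_
      constructor
      · rintro ⟨⟨⟨h1, h2⟩, h3⟩, h4⟩; exact ⟨h2, h3, h4⟩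
      · rintro ⟨h2, h3, h4⟩
        refine ⟨⟨⟨?_, h2⟩, h3⟩, h4⟩
        rw [h2, h4]
        intro hz
        exact hxz ((hsym x z).mp hz)
  have hH : condEntropy μ X Y
      = ∑ x, ∑ y ∈ Yim, Pxy x y * (Real.logb 2 (Py y) - Real.logb 2 (Pxy x y)) := by
    have hEY : entropy μ Y = -∑ y ∈ Yim, Py y * Real.logb 2 (Py y) := by
      simp only [hPydef]
      exact entropy_eq μ Y Yim hYmem
    have hEXY : entropy μ (fun ω => (X ω, Y ω))
        = -∑ x, ∑ y ∈ Yim, Pxy x y * Real.logb 2 (Pxy x y) := by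
      rw [entropy_eq μ (fun ω => (X ω, Y ω)) (Finset.univ ×ˢ Yim)
        (fun ω => Finset.mem_product.mpr ⟨Finset.mem_univ _, hYmem ω⟩)]
      congr 1
      rw [Finset.sum_product]
      refine Finset.sum_congr rfl fun x _ => Finset.sum_congr rfl fun y _ => ?_
      have hfe : ∑ ω ∈ Finset.univ.filter (fun ω => (X ω, Y ω) = (x, y)), μ ω = Pxy x y := by
        simp only [hPxydef]
        exact filter_sum_ext μ _ _ fun ω => by simp [Prod.ext_iff]
      rw [hfe]
    rw [condEntropy, hEXY, hEY]
    have hPy' : ∑ y ∈ Yim, Py y * Real.logb 2 (Py y)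
        = ∑ x, ∑ y ∈ Yim, Pxy x y * Real.logb 2 (Py y) := by
      rw [Finset.sum_comm]
      refine Finset.sum_congr rfl fun y _ => ?_
      rw [hPyP y, Finset.sum_mul]
    rw [hPy']
    simp only [mul_sub, Finset.sum_sub_distrib]
    ring
  rw [hH]
  exact fano_core Yim P Pxy Py Pyz hP0 hPxyP hPyP hPyzP htot hM 𝒜 hmem pe hpe'
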